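/- Let R be a ring and n a natural number. The following are equivalent: (i) R is reduced and n-skew-Armendariz; (ii) R is reduced; (iii) the ring A_n is reduced. -/

import Mathlib

section Aux

variable {R : Type*} [Ring R]

/-- In a reduced ring, `a * b = 0` implies `b * a = 0`. -/
lemma reduced_mul_comm_zero (hR : IsReduced R) {a b : R} (h : a * b = 0) : b * a = 0 := by
  have h2 : (b * a) ^ 2 = 0 := by
    rw [pow_two]
    calc (b * a) * (b * a) = b * (a * b) * a := by noncomm_ring
    _ = 0 := by rw [h]; simp
  exact hR.eq_zero _ ⟨2, h2⟩

/-- In a reduced ring, `a * b = 0` implies `a * c * b = 0` for any `c`. -/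
lemma reduced_mul_mid_zero (hR : IsReduced R) {a b : R} (h : a * b = 0) (c : R) :
    a * c * b = 0 := by
  have hba : b * a = 0 := reduced_mul_comm_zero hR h
  have h2 : (a * c * b) ^ 2 = 0 := by
    rw [pow_two]
    calc (a * c * b) * (a * c * b) = a * c * (b * a) * (c * b) := by noncomm_ring
    _ = 0 := by rw [hba]; simp
  exact hR.eq_zero _ ⟨2, h2⟩

/-- If every square-zero element is zero, the ring is reduced. -/
lemma isReduced_of_sq {S : Type*} [Ring S] (h : ∀ x : S, x * x = 0 → x = 0) :
    IsReduced S := by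
  constructor
  rintro x ⟨k, hk⟩
  induction k using Nat.strong_induction_on generalizing x with
  | _ k ih =>
    match k with
    | 0 => simpa using congrArg (· * x) hk
    | 1 => simpa using hk
    | (k + 2) =>
      have hsq : x ^ (k + 1) * x ^ (k + 1) = 0 := by
        rw [← pow_add, show k + 1 + (k + 1) = (k + 2) + k by omega, pow_add, hk, zero_mul]
      exact ih (k + 1) (by omega) x (h _ hsq)

lemma degree_add' (a b : Fin n →₀ ℕ) :
    Finsupp.degree (a + b) = Finsupp.degree a + Finsupp.degree b := by
  simp only [Finsupp.degree_eq_weight_one, map_add]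

/-- Key Armendariz-type lemma: over a reduced ring, if `f * g = 0` in
`AddMonoidAlgebra R (Fin n →₀ ℕ)`, then `f 0 * g m = 0` for all `m`. -/
lemma armendariz_of_reduced (hR : IsReduced R) {n : ℕ}
    (f g : AddMonoidAlgebra R (Fin n →₀ ℕ)) (h : f * g = 0) :
    ∀ m : Fin n →₀ ℕ, f.coeff 0 * g.coeff m = 0 := by
  suffices H : ∀ d : ℕ, ∀ m : Fin n →₀ ℕ, Finsupp.degree m = d → f.coeff 0 * g.coeff m = 0 from
    fun m => H _ m rfl
  intro d
  induction d using Nat.strong_induction_on with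
  | _ d ih =>
    intro m hm
    have h0 : (0 : R) = ∑ p ∈ Finset.HasAntidiagonal.antidiagonal m, f.coeff p.1 * g.coeff p.2 := by
      rw [← AddMonoidAlgebra.mul_apply_antidiagonal f g m (Finset.HasAntidiagonal.antidiagonal m)
        (fun {p} => Finset.HasAntidiagonal.mem_antidiagonal), h]
      rfl
    have key : f.coeff 0 * g.coeff m * f.coeff 0 = 0 := by
      have h1 : (0 : R) = ∑ p ∈ Finset.HasAntidiagonal.antidiagonal m, f.coeff p.1 * g.coeff p.2 * f.coeff 0 := by
        calc (0 : R) = (∑ p ∈ Finset.HasAntidiagonal.antidiagonal m, f.coeff p.1 * g.coeff p.2) * f.coeff 0 := by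
              rw [← h0, zero_mul]
        _ = _ := Finset.sum_mul _ _ _
      rw [Finset.sum_eq_single_of_mem ((0 : Fin n →₀ ℕ), m)
        (Finset.HasAntidiagonal.mem_antidiagonal.2 (zero_add m)) ?_] at h1
      · exact h1.symm
      · rintro ⟨s, t⟩ hp hne
        have hst : s + t = m := Finset.HasAntidiagonal.mem_antidiagonal.1 hp
        have hs : s ≠ 0 := by
          rintro rfl
          exact hne (by rw [Prod.mk.injEq]; exact ⟨rfl, by rw [← hst, zero_add]⟩)
        have hdt : Finsupp.degree t < d := by
          have := degree_add' s t
          rw [hst, hm] at this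
          have hs' : Finsupp.degree s ≠ 0 := fun h0 => hs ((Finsupp.degree_eq_zero_iff s).1 h0)
          omega
        have h2 : f.coeff 0 * g.coeff t = 0 := ih _ hdt t rfl
        have h3 : g.coeff t * f.coeff 0 = 0 := reduced_mul_comm_zero hR h2
        rw [mul_assoc, h3, mul_zero]
    have h2 : (f.coeff 0 * g.coeff m) ^ 2 = 0 := by
      rw [pow_two, ← mul_assoc, key, zero_mul]
    exact hR.eq_zero _ ⟨2, h2⟩

/-- Over a reduced ring, `AddMonoidAlgebra R (Fin n →₀ ℕ)` is reduced. -/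
lemma isReduced_addMonoidAlgebra (hR : IsReduced R) (n : ℕ) :
    IsReduced (AddMonoidAlgebra R (Fin n →₀ ℕ)) := by
  apply isReduced_of_sq
  intro a ha
  by_contra hne
  set D : (Fin n →₀ ℕ) → Lex (Fin n →₀ ℕ) := fun x => toLex x with hD
  have hDinj : Function.Injective D := toLex.injective
  have hadd : ∀ x y : Fin n →₀ ℕ, D (x + y) = D x + D y := fun _ _ => rfl
  have := AddMonoidAlgebra.apply_supDegree_add_supDegree (D := D) hDinj hadd (p := a) (q := a)
  rw [ha] at this
  have hlead : AddMonoidAlgebra.leadingCoeff D a * AddMonoidAlgebra.leadingCoeff D a = 0 := by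
    rw [← this]; rfl
  have : AddMonoidAlgebra.leadingCoeff D a = 0 :=
    hR.eq_zero _ ⟨2, by rw [pow_two, hlead]⟩
  exact hne ((AddMonoidAlgebra.leadingCoeff_eq_zero hDinj).1 this)

end Aux

/-- For a ring `R` and `n : ℕ`, with `A_n = AddMonoidAlgebra R (Fin n →₀ ℕ)`,
the following are equivalent: (i) `R` is reduced and `n`-skew-Armendariz;
(ii) `R` is reduced; (iii) `A_n` is reduced. -/
theorem reduced_nSkewArmendariz_tfae (R : Type*) [Ring R] (n : ℕ) :
    [ IsReduced R ∧ (∀ f g : AddMonoidAlgebra R (Fin n →₀ ℕ), f * g = 0 →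
        ∀ m : Fin n →₀ ℕ, f.coeff 0 * g.coeff m = 0),
      IsReduced R,
      IsReduced (AddMonoidAlgebra R (Fin n →₀ ℕ)) ].TFAE := by
  tfae_have 1 → 2 := fun h => h.1
  tfae_have 2 → 3 := fun h => isReduced_addMonoidAlgebra h n
  tfae_have 3 → 2 := by
    intro h
    constructor
    rintro r ⟨k, hk⟩
    have : (AddMonoidAlgebra.singleZeroRingHom (R := R) (M := Fin n →₀ ℕ)) r = 0 :=
      h.eq_zero _ ⟨k, by rw [← map_pow, hk, map_zero]⟩
    have := AddMonoidAlgebra.single_right_injective (m := (0 : Fin n →₀ ℕ))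
      (this.trans (AddMonoidAlgebra.single_zero 0).symm)
    exact this
  tfae_have 2 → 1 := fun h => ⟨h, fun f g hfg => armendariz_of_reduced h f g hfg⟩
  tfae_finish
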